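/- arXiv:0812.4353 — 4 statements merged into one kernel-verified Lean document; each statement's English description precedes it below -/
import Mathlib

section
/- For any u ∈ [0,1] and any finite family x₁,...,xₙ ∈ [0,1], one has 1 - ∏ᵢ(1 - u·xᵢ) ≥ u·(1 - ∏ᵢ(1 - xᵢ)). -/
open Finset

theorem one_sub_prod_one_sub_mul_ge
    (n : ℕ) (hn : 1 ≤ n) (u : ℝ) (hu : u ∈ Set.Icc (0:ℝ) 1)
    (x : Fin n → ℝ) (hx : ∀ i, x i ∈ Set.Icc (0:ℝ) 1) :
    u * (1 - ∏ i, (1 - x i)) ≤ 1 - ∏ i, (1 - u * x i) := by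
  clear hn
  obtain ⟨hu0, hu1⟩ := hu
  induction n with
  | zero => simp
  | succ n ih =>
    have hx' : ∀ i : Fin n, x i.succ ∈ Set.Icc (0:ℝ) 1 := fun i => hx i.succ
    have IH := ih (fun i => x i.succ) hx'
    obtain ⟨ha0, ha1⟩ := hx 0
    set a := x 0 with ha
    set P := ∏ i : Fin n, (1 - x i.succ) with hP
    set Q := ∏ i : Fin n, (1 - u * x i.succ) with hQ
    have hPQ : P ≤ Q := by
      apply Finset.prod_le_prod
      · intro i _
        have := (hx' i).2
        linarith
      · intro i _
        have h1 := (hx' i).1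
        have h2 := (hx' i).2
        nlinarith
    have hP0 : 0 ≤ P := Finset.prod_nonneg fun i _ => by linarith [(hx' i).2]
    rw [Fin.prod_univ_succ, Fin.prod_univ_succ]
    nlinarith [mul_nonneg (mul_nonneg hu0 ha0) (sub_nonneg.2 hPQ)]
end

section
/- Let κ : [0,∞) → [0,1] be non-decreasing and concave with κ(0) ≥ 0, and let x₁,...,xₙ ∈ S₂ ⊆ [0,∞) with n ≥ 1. Then the function u ↦ 1 - ∏ᵢ(1 - κ(xᵢ·u)) is non-decreasing and concave on [0,∞). -/
open Finset Set

lemma aux_prod_convex {n : ℕ} (g : Fin n → ℝ → ℝ)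
    (hconv : ∀ i, ConvexOn ℝ (Set.Ici 0) (g i))
    (hanti : ∀ i, AntitoneOn (g i) (Set.Ici 0))
    (hnn : ∀ i, ∀ u ∈ Set.Ici (0:ℝ), 0 ≤ g i u) (F : Finset (Fin n)) :
    ConvexOn ℝ (Set.Ici 0) (fun u => ∏ i ∈ F, g i u) := by
  classical
  induction F using Finset.induction_on with
  | empty => simpa using convexOn_const (1:ℝ) (convex_Ici 0)
  | @insert a s hnotmem ih =>
    have hrest_anti : AntitoneOn (fun u => ∏ i ∈ s, g i u) (Set.Ici 0) := by
      intro u hu v hv huv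
      exact Finset.prod_le_prod (fun i _ => hnn i v hv) (fun i _ => hanti i hu hv huv)
    have hrest_nn : ∀ u ∈ Set.Ici (0:ℝ), 0 ≤ ∏ i ∈ s, g i u := fun u hu =>
      Finset.prod_nonneg fun i _ => hnn i u hu
    have h := (hconv a).mul ih (fun u hu => hnn a u hu) hrest_nn
      ((hanti a).monovaryOn hrest_anti)
    simpa [Finset.prod_insert hnotmem, Pi.mul_def] using h

theorem one_sub_prod_one_sub_kappa_monotone_concave
    (κ : ℝ → ℝ)
    (hκmono : MonotoneOn κ (Set.Ici 0))
    (hκconc : ConcaveOn ℝ (Set.Ici 0) κ)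
    (hκval : ∀ z ∈ Set.Ici (0:ℝ), κ z ∈ Set.Icc (0:ℝ) 1)
    (n : ℕ) (hn : 1 ≤ n) (x : Fin n → ℝ) (hx : ∀ i, 0 ≤ x i) :
    MonotoneOn (fun u => 1 - ∏ i, (1 - κ (x i * u))) (Set.Ici 0) ∧
      ConcaveOn ℝ (Set.Ici 0) (fun u => 1 - ∏ i, (1 - κ (x i * u))) := by
  set g : Fin n → ℝ → ℝ := fun i u => 1 - κ (x i * u) with hg
  have hconv : ∀ i, ConvexOn ℝ (Set.Ici 0) (g i) := by
    intro i
    have hcc : ConcaveOn ℝ (Set.Ici 0) (fun u => κ (x i * u)) := by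
      refine ⟨convex_Ici 0, fun u hu v hv a b ha hb hab => ?_⟩
      simp only [smul_eq_mul]
      have h1 : x i * (a * u + b * v) = a * (x i * u) + b * (x i * v) := by ring
      rw [h1]
      exact hκconc.2 (mul_nonneg (hx i) hu) (mul_nonneg (hx i) hv) ha hb hab
    simpa [hg, sub_eq_add_neg, Pi.add_def, Pi.neg_def] using (convexOn_const (1:ℝ) (convex_Ici 0)).add hcc.neg
  have hanti : ∀ i, AntitoneOn (g i) (Set.Ici 0) := by
    intro i u hu v hv huv
    have : κ (x i * u) ≤ κ (x i * v) :=
      hκmono (mul_nonneg (hx i) hu) (mul_nonneg (hx i) hv)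
        (mul_le_mul_of_nonneg_left huv (hx i))
    simp only [hg]; linarith
  have hnn : ∀ i, ∀ u ∈ Set.Ici (0:ℝ), 0 ≤ g i u := by
    intro i u hu
    have := (hκval (x i * u) (mul_nonneg (hx i) hu)).2
    simp only [hg]; linarith
  have hP : ConvexOn ℝ (Set.Ici 0) (fun u => ∏ i, g i u) :=
    aux_prod_convex g hconv hanti hnn Finset.univ
  have hPanti : AntitoneOn (fun u => ∏ i, g i u) (Set.Ici 0) := by
    intro u hu v hv huv
    exact Finset.prod_le_prod (fun i _ => hnn i v hv) (fun i _ => hanti i hu hv huv)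
  constructor
  · intro u hu v hv huv
    have := hPanti hu hv huv
    simp only; linarith
  · simpa [hg, sub_eq_add_neg, Pi.add_def, Pi.neg_def] using (concaveOn_const (1:ℝ) (convex_Ici 0)).add hP.neg
end

section
/- Let κ : [0,∞) → [0,1] be non-decreasing and concave, let W̄ be a [0,∞)-valued random variable, and let y₁,...,yₘ ≥ 0 with m ≥ 1. Then E[∏ⱼ(1 - κ(yⱼ·W̄))] ≥ ∏ⱼ(1 - κ(yⱼ·E[W̄])); in particular, if W̄* ≥ E[W̄] then E[∏ⱼ(1 - κ(yⱼ·W̄))] ≥ ∏ⱼ(1 - κ(yⱼ·W̄*)). -/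
open Finset MeasureTheory

/-- Jensen's inequality for a convex function on `[0, ∞)`, via a subgradient. -/
lemma jensen_Ici_aux {Ω : Type*} [MeasurableSpace Ω] (μ : Measure Ω) [IsProbabilityMeasure μ]
    (g : ℝ → ℝ) (hg : ConvexOn ℝ (Set.Ici 0) g) (f : Ω → ℝ) (hf0 : ∀ ω, 0 ≤ f ω)
    (hfi : Integrable f μ) (hgi : Integrable (fun ω => g (f ω)) μ) :
    g (∫ ω, f ω ∂μ) ≤ ∫ ω, g (f ω) ∂μ := by
  set a := ∫ ω, f ω ∂μ with ha_def
  have ha : 0 ≤ a := integral_nonneg hf0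
  rcases eq_or_lt_of_le ha with h0 | hpos
  · -- a = 0 : f = 0 a.e.
    have hf0' : 0 ≤ᵐ[μ] f := Filter.Eventually.of_forall hf0
    have hzero : f =ᵐ[μ] 0 := by
      have := (integral_eq_zero_iff_of_nonneg_ae hf0' hfi).mp h0.symm
      exact this
    have : (fun ω => g (f ω)) =ᵐ[μ] fun _ => g 0 := by
      filter_upwards [hzero] with ω hω
      simp [hω]
    rw [integral_congr_ae this, integral_const]
    simp [← h0]
  · -- a > 0 : pick subgradient c at a
    set S : Set ℝ := (fun v => (g v - g a) / (v - a)) '' Set.Ioi a with hS_def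
    have hSne : S.Nonempty := ⟨_, ⟨a + 1, by simp, rfl⟩⟩
    have haI : a ∈ Set.Ici (0:ℝ) := ha
    have hbdd : BddBelow S := by
      refine ⟨(g a - g 0) / (a - 0), ?_⟩
      rintro x ⟨v, hv, rfl⟩
      exact hg.slope_mono_adjacent (le_refl (0:ℝ)) (le_of_lt (hpos.trans hv)) hpos hv
    set c := sInf S with hc_def
    have key : ∀ u, 0 ≤ u → g a + c * (u - a) ≤ g u := by
      intro u hu
      rcases lt_trichotomy u a with hlt | heq | hgt
      · -- u < a : slope g u a ≤ c
        have hle : (g a - g u) / (a - u) ≤ c := by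
          apply le_csInf hSne
          rintro x ⟨v, hv, rfl⟩
          exact hg.slope_mono_adjacent hu (le_of_lt (hpos.trans hv)) hlt hv
        have hau : (0:ℝ) < a - u := by linarith
        have h2 : g a - g u ≤ c * (a - u) := by
          have := (div_le_iff₀ hau).mp hle
          linarith
        nlinarith
      · simp [heq]
      · -- u > a : c ≤ slope g a u
        have hle : c ≤ (g u - g a) / (u - a) := csInf_le hbdd ⟨u, hgt, rfl⟩
        have hau : (0:ℝ) < u - a := by linarith
        have h2 : c * (u - a) ≤ g u - g a := by
          have := (le_div_iff₀ hau).mp hle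
          linarith
        linarith
    -- integrate the subgradient inequality
    have hint2 : Integrable (fun ω => g a + c * (f ω - a)) μ :=
      (integrable_const (g a)).add (((hfi.sub (integrable_const a)).const_mul c))
    have hmono : ∫ ω, (g a + c * (f ω - a)) ∂μ ≤ ∫ ω, g (f ω) ∂μ :=
      integral_mono hint2 hgi fun ω => key (f ω) (hf0 ω)
    have hI2 : Integrable (fun ω => f ω - a) μ := by
      exact hfi.sub (integrable_const a)
    have hI1 : Integrable (fun ω => c * (f ω - a)) μ := by
      exact hI2.const_mul c
    have hcalc : ∫ ω, (g a + c * (f ω - a)) ∂μ = g a := by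
      rw [integral_add (integrable_const _) hI1, integral_const_mul,
        integral_sub hfi (integrable_const a), integral_const]
      simp [← ha_def]
    linarith [hmono, hcalc ▸ hmono]

/-- The product over a finset of nonnegative antitone convex functions is convex,
nonnegative and antitone on `Ici 0`. -/
lemma prod_convex_aux {ι : Type*} (s : Finset ι) (f : ι → ℝ → ℝ)
    (hconv : ∀ i ∈ s, ConvexOn ℝ (Set.Ici 0) (f i))
    (hnonneg : ∀ i ∈ s, ∀ x ∈ Set.Ici (0:ℝ), 0 ≤ f i x)
    (hanti : ∀ i ∈ s, AntitoneOn (f i) (Set.Ici 0)) :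
    ConvexOn ℝ (Set.Ici 0) (fun u => ∏ i ∈ s, f i u) ∧
      (∀ x ∈ Set.Ici (0:ℝ), 0 ≤ ∏ i ∈ s, f i x) ∧
      AntitoneOn (fun u => ∏ i ∈ s, f i u) (Set.Ici 0) := by
  induction s using Finset.cons_induction with
  | empty =>
    refine ⟨?_, ?_, ?_⟩
    · simpa using convexOn_const (1:ℝ) (convex_Ici 0)
    · simp
    · intro x _ y _ _; simp
  | cons i s his ih =>
    obtain ⟨ihc, ihn, iha⟩ := ih (fun j hj => hconv j (Finset.mem_cons_of_mem hj))
      (fun j hj => hnonneg j (Finset.mem_cons_of_mem hj))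
      (fun j hj => hanti j (Finset.mem_cons_of_mem hj))
    have hci := hconv i (Finset.mem_cons_self i s)
    have hni := hnonneg i (Finset.mem_cons_self i s)
    have hai := hanti i (Finset.mem_cons_self i s)
    have hmul : ConvexOn ℝ (Set.Ici 0) ((f i) * fun u => ∏ j ∈ s, f j u) := by
      refine hci.mul ihc (fun x hx => hni x hx) (fun x hx => ihn x hx) ?_
      exact hai.monovaryOn iha
    refine ⟨?_, ?_, ?_⟩
    · have : ((f i) * fun u => ∏ j ∈ s, f j u) = fun u => ∏ j ∈ Finset.cons i s his, f j u := by
        funext u; simp [Finset.prod_cons]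
      exact this ▸ hmul
    · intro x hx
      rw [Finset.prod_cons]
      exact mul_nonneg (hni x hx) (ihn x hx)
    · intro x hx y hy hxy
      simp only [Finset.prod_cons]
      exact mul_le_mul (hai hx hy hxy) (iha hx hy hxy) (ihn y hy) (hni x hx)

theorem jensen_prod_one_sub_kappa
    {Ω : Type*} [MeasurableSpace Ω] (μ : Measure Ω) [IsProbabilityMeasure μ]
    (κ : ℝ → ℝ)
    (hκmono : MonotoneOn κ (Set.Ici 0))
    (hκconc : ConcaveOn ℝ (Set.Ici 0) κ)
    (hκval : ∀ z ∈ Set.Ici (0:ℝ), κ z ∈ Set.Icc (0:ℝ) 1)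
    (Wbar : Ω → ℝ) (hWbar0 : ∀ ω, 0 ≤ Wbar ω) (hWbarint : Integrable Wbar μ)
    (m : ℕ) (hm : 1 ≤ m) (y : Fin m → ℝ) (hy : ∀ j, 0 ≤ y j)
    (hint : Integrable (fun ω => ∏ j, (1 - κ (y j * Wbar ω))) μ)
    (Wbarstar : ℝ) (hWbs : ∫ ω, Wbar ω ∂μ ≤ Wbarstar) :
    (∏ j, (1 - κ (y j * ∫ ω, Wbar ω ∂μ)) ≤ ∫ ω, ∏ j, (1 - κ (y j * Wbar ω)) ∂μ) ∧
      ∏ j, (1 - κ (y j * Wbarstar)) ≤ ∫ ω, ∏ j, (1 - κ (y j * Wbar ω)) ∂μ := by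
  set f : Fin m → ℝ → ℝ := fun j u => 1 - κ (y j * u) with hf_def
  have hmem : ∀ (j : Fin m) (u : ℝ), 0 ≤ u → y j * u ∈ Set.Ici (0:ℝ) :=
    fun j u hu => mul_nonneg (hy j) hu
  have hconv : ∀ j ∈ Finset.univ (α := Fin m), ConvexOn ℝ (Set.Ici 0) (f j) := by
    intro j _
    have hlin : ConcaveOn ℝ (Set.Ici 0) (fun u => κ (y j * u)) := by
      refine ⟨convex_Ici 0, fun x hx z hz p q hp hq hpq => ?_⟩
      have harg : y j * (p * x + q * z) = p * (y j * x) + q * (y j * z) := by ring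
      have := hκconc.2 (hmem j x hx) (hmem j z hz) hp hq hpq
      simpa [smul_eq_mul, harg] using this
    have heq : f j = (fun u => -κ (y j * u) + 1) := by
      funext u; simp [hf_def]; ring
    rw [heq]
    exact hlin.neg.add_const 1
  have hnonneg : ∀ j ∈ Finset.univ (α := Fin m), ∀ x ∈ Set.Ici (0:ℝ), 0 ≤ f j x := by
    intro j _ x hx
    have := (hκval _ (hmem j x hx)).2
    simp only [hf_def]; linarith
  have hanti : ∀ j ∈ Finset.univ (α := Fin m), AntitoneOn (f j) (Set.Ici 0) := by
    intro j _ x hx z hz hxz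
    have : κ (y j * x) ≤ κ (y j * z) :=
      hκmono (hmem j x hx) (hmem j z hz) (mul_le_mul_of_nonneg_left hxz (hy j))
    simp only [hf_def]; linarith
  obtain ⟨hgconv, hgnonneg, hganti⟩ := prod_convex_aux Finset.univ f hconv hnonneg hanti
  have h1 : ∏ j, (1 - κ (y j * ∫ ω, Wbar ω ∂μ)) ≤ ∫ ω, ∏ j, (1 - κ (y j * Wbar ω)) ∂μ := by
    have := jensen_Ici_aux μ (fun u => ∏ j, f j u) hgconv Wbar hWbar0 hWbarint
      (by simpa [hf_def] using hint)
    simpa [hf_def] using this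
  refine ⟨h1, ?_⟩
  have ha : (0:ℝ) ≤ ∫ ω, Wbar ω ∂μ := integral_nonneg hWbar0
  have h2 : (fun u => ∏ j, f j u) Wbarstar ≤ (fun u => ∏ j, f j u) (∫ ω, Wbar ω ∂μ) :=
    hganti ha (ha.trans hWbs) hWbs
  simp only [hf_def] at h2
  linarith
end

section
/- Let κ : [0,∞) → [0,1] be non-decreasing and concave, (W, W̄) a random vector in [0,∞)², and W*, W̄* ≥ 0 with E[W] ≤ W*, E[W̄] ≤ W̄*, E[W·W̄] ≤ W*·W̄*. Then for any x₁,...,xₙ ≥ 0 and y₁,...,yₘ ≥ 0 with n, m ≥ 1: E[(1 - ∏ᵢ(1 - κ(W·xᵢ)))·(1 - ∏ⱼ(1 - κ(W̄·yⱼ)))] ≤ (1 - ∏ᵢ(1 - κ(W*·xᵢ)))·(1 - ∏ⱼ(1 - κ(W̄*·yⱼ))). -/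
open Finset MeasureTheory

lemma factor_convexOn {κ : ℝ → ℝ} (hκconc : ConcaveOn ℝ (Set.Ici 0) κ) {c : ℝ} (hc : 0 ≤ c) :
    ConvexOn ℝ (Set.Ici 0) (fun u => 1 - κ (u * c)) := by
  have hcc : ConcaveOn ℝ (Set.Ici 0) (fun u => κ (u * c)) := by
    refine ⟨convex_Ici 0, fun u hu v hv a b ha hb hab => ?_⟩
    have h1 : u * c ∈ Set.Ici (0:ℝ) := mul_nonneg hu hc
    have h2 : v * c ∈ Set.Ici (0:ℝ) := mul_nonneg hv hc
    have := hκconc.2 h1 h2 ha hb hab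
    simp only [smul_eq_mul] at this ⊢
    calc a * κ (u * c) + b * κ (v * c) ≤ κ (a * (u * c) + b * (v * c)) := this
      _ = κ ((a * u + b * v) * c) := by ring_nf
  have := hcc.neg.add_const 1
  convert this using 1
  any_goals rfl
  funext u; simp [sub_eq_neg_add]

lemma prod_convexOn {κ : ℝ → ℝ}
    (hκmono : MonotoneOn κ (Set.Ici 0))
    (hκconc : ConcaveOn ℝ (Set.Ici 0) κ)
    (hκval : ∀ z ∈ Set.Ici (0:ℝ), κ z ∈ Set.Icc (0:ℝ) 1)
    {n : ℕ} (x : Fin n → ℝ) (hx : ∀ i, 0 ≤ x i) (s : Finset (Fin n)) :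
    ConvexOn ℝ (Set.Ici 0) (fun u => ∏ i ∈ s, (1 - κ (u * x i))) ∧
    AntitoneOn (fun u => ∏ i ∈ s, (1 - κ (u * x i))) (Set.Ici 0) ∧
    (∀ u ∈ Set.Ici (0:ℝ), 0 ≤ ∏ i ∈ s, (1 - κ (u * x i))) := by
  have hfac0 : ∀ (i : Fin n), ∀ u ∈ Set.Ici (0:ℝ), 0 ≤ 1 - κ (u * x i) := fun i u hu =>
    sub_nonneg.2 (hκval _ (mul_nonneg hu (hx i))).2
  have hfacA : ∀ (i : Fin n), AntitoneOn (fun u => 1 - κ (u * x i)) (Set.Ici 0) := by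
    intro i u hu v hv huv
    have := hκmono (mul_nonneg hu (hx i)) (mul_nonneg hv (hx i))
      (mul_le_mul_of_nonneg_right huv (hx i))
    simp only
    linarith
  induction s using Finset.cons_induction with
  | empty =>
    refine ⟨?_, ?_, ?_⟩ <;> simp only [Finset.prod_empty]
    · exact convexOn_const 1 (convex_Ici 0)
    · exact antitoneOn_const
    · intro u _; norm_num
  | cons i s hi ih =>
    obtain ⟨hc, ha, h0⟩ := ih
    have hAprod : AntitoneOn (fun u => (1 - κ (u * x i)) * ∏ j ∈ s, (1 - κ (u * x j)))
        (Set.Ici 0) := by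
      intro u hu v hv huv
      exact mul_le_mul (hfacA i hu hv huv) (ha hu hv huv) (h0 v hv) (hfac0 i u hu)
    refine ⟨?_, ?_, ?_⟩
    · have := (factor_convexOn hκconc (hx i)).mul hc (hfac0 i) h0
        (((hfacA i).monovaryOn ha))
      simp only [Finset.prod_cons]
      exact this
    · simpa only [Finset.prod_cons] using hAprod
    · intro u hu
      simp only [Finset.prod_cons]
      exact mul_nonneg (hfac0 i u hu) (h0 u hu)

lemma exists_support {F : ℝ → ℝ} (hconc : ConcaveOn ℝ (Set.Ici 0) F)
    (hmono : MonotoneOn F (Set.Ici 0)) (hF0 : 0 ≤ F 0) {t : ℝ} (ht : 0 < t) :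
    ∃ a b : ℝ, 0 ≤ a ∧ 0 ≤ b ∧ a + b * t = F t ∧ ∀ u ∈ Set.Ici (0:ℝ), F u ≤ a + b * u := by
  set S : Set ℝ := (fun v => (F v - F t) / (v - t)) '' Set.Ioi t with hS
  have hne : S.Nonempty := ⟨_, ⟨t + 1, by simp [ht], rfl⟩⟩
  have hub : ∀ r ∈ S, r ≤ (F t - F 0) / t := by
    rintro r ⟨v, hv, rfl⟩
    have := hconc.slope_anti_adjacent (x := 0) (y := t) (z := v)
      (Set.self_mem_Ici) (le_of_lt (ht.trans hv)) ht hv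
    simpa using this
  have hbdd : BddAbove S := ⟨_, hub⟩
  set b := sSup S with hb
  have hb0 : 0 ≤ b := by
    have hmem : (F (t+1) - F t) / ((t+1) - t) ∈ S := ⟨t + 1, by simp [ht], rfl⟩
    have h1 : 0 ≤ (F (t+1) - F t) / ((t+1) - t) := by
      have := hmono (le_of_lt ht) (by positivity : (0:ℝ) ≤ t + 1) (by linarith)
      have h2 : ((t:ℝ)+1) - t = 1 := by ring
      rw [h2]; simpa using this
    exact h1.trans (le_csSup hbdd hmem)
  have hble : b ≤ (F t - F 0) / t := csSup_le hne hub
  have hbt : b * t ≤ F t - F 0 := by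
    rw [← le_div_iff₀ ht] at *
    exact hble
  refine ⟨F t - b * t, b, by linarith, hb0, by ring, ?_⟩
  intro u hu
  rcases lt_trichotomy u t with h | h | h
  · -- u < t : slope(u,t) is ub of S, so b ≤ slope(u,t)
    have hub' : ∀ r ∈ S, r ≤ (F t - F u) / (t - u) := by
      rintro r ⟨v, hv, rfl⟩
      have := hconc.slope_anti_adjacent (x := u) (y := t) (z := v)
        hu (le_of_lt (ht.trans hv)) h hv
      simpa using this
    have hble' : b ≤ (F t - F u) / (t - u) := csSup_le hne hub'
    have : b * (t - u) ≤ F t - F u := by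
      rw [← le_div_iff₀ (by linarith : (0:ℝ) < t - u)]
      exact hble'
    nlinarith
  · subst h; linarith
  · have hmem : (F u - F t) / (u - t) ∈ S := ⟨u, h, rfl⟩
    have : (F u - F t) / (u - t) ≤ b := le_csSup hbdd hmem
    have : F u - F t ≤ b * (u - t) := by
      rw [div_le_iff₀ (by linarith : (0:ℝ) < u - t)] at this
      linarith [this]
    nlinarith

lemma exists_support_ae {Ω : Type*} [MeasurableSpace Ω] (μ : Measure Ω) [IsProbabilityMeasure μ]
    {F : ℝ → ℝ} (hconc : ConcaveOn ℝ (Set.Ici 0) F) (hmono : MonotoneOn F (Set.Ici 0))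
    (hF0 : 0 ≤ F 0) {W : Ω → ℝ} (hW0 : ∀ ω, 0 ≤ W ω) (hWint : Integrable W μ)
    {t : ℝ} (ht : 0 ≤ t) (hEW : ∫ ω, W ω ∂μ ≤ t) :
    ∃ a b : ℝ, 0 ≤ a ∧ 0 ≤ b ∧ a + b * t = F t ∧ ∀ᵐ ω ∂μ, F (W ω) ≤ a + b * W ω := by
  rcases ht.lt_or_eq with ht' | ht'
  · obtain ⟨a, b, ha, hb, heq, hle⟩ := exists_support hconc hmono hF0 ht'
    exact ⟨a, b, ha, hb, heq, Filter.Eventually.of_forall fun ω => hle _ (hW0 ω)⟩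
  · subst ht'
    have hint0 : ∫ ω, W ω ∂μ = 0 :=
      le_antisymm hEW (integral_nonneg hW0)
    have hW : W =ᵐ[μ] 0 :=
      (integral_eq_zero_iff_of_nonneg hW0 hWint).1 hint0
    refine ⟨F 0, 0, hF0, le_refl 0, by ring, ?_⟩
    filter_upwards [hW] with ω hω
    simp [hω]
theorem bond_percolation_zero_function_bound
    {Ω : Type*} [MeasurableSpace Ω] (μ : Measure Ω) [IsProbabilityMeasure μ]
    (κ : ℝ → ℝ)
    (hκmono : MonotoneOn κ (Set.Ici 0))
    (hκconc : ConcaveOn ℝ (Set.Ici 0) κ)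
    (hκval : ∀ z ∈ Set.Ici (0:ℝ), κ z ∈ Set.Icc (0:ℝ) 1)
    (W Wbar : Ω → ℝ) (hW0 : ∀ ω, 0 ≤ W ω) (hWbar0 : ∀ ω, 0 ≤ Wbar ω)
    (hWint : Integrable W μ) (hWbarint : Integrable Wbar μ)
    (hWWint : Integrable (fun ω => W ω * Wbar ω) μ)
    (Wstar Wbarstar : ℝ) (hWs : 0 ≤ Wstar) (hWbs : 0 ≤ Wbarstar)
    (hEW : ∫ ω, W ω ∂μ ≤ Wstar) (hEWbar : ∫ ω, Wbar ω ∂μ ≤ Wbarstar)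
    (hEWW : ∫ ω, W ω * Wbar ω ∂μ ≤ Wstar * Wbarstar)
    (n m : ℕ) (hn : 1 ≤ n) (hm : 1 ≤ m)
    (x : Fin n → ℝ) (y : Fin m → ℝ) (hx : ∀ i, 0 ≤ x i) (hy : ∀ j, 0 ≤ y j)
    (hint : Integrable (fun ω =>
      (1 - ∏ i, (1 - κ (W ω * x i))) * (1 - ∏ j, (1 - κ (Wbar ω * y j)))) μ) :
    ∫ ω, (1 - ∏ i, (1 - κ (W ω * x i))) * (1 - ∏ j, (1 - κ (Wbar ω * y j))) ∂μ ≤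
      (1 - ∏ i, (1 - κ (Wstar * x i))) * (1 - ∏ j, (1 - κ (Wbarstar * y j))) := by
  set F : ℝ → ℝ := fun u => 1 - ∏ i, (1 - κ (u * x i)) with hF
  set G : ℝ → ℝ := fun u => 1 - ∏ j, (1 - κ (u * y j)) with hG
  -- properties of F
  obtain ⟨hFconv, hFanti, hFpos⟩ := prod_convexOn hκmono hκconc hκval x hx Finset.univ
  obtain ⟨hGconv, hGanti, hGpos⟩ := prod_convexOn hκmono hκconc hκval y hy Finset.univ
  have hFconc : ConcaveOn ℝ (Set.Ici 0) F := by
    have := hFconv.neg.add_const 1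
    convert this using 1
    any_goals rfl
    funext u; simp [hF, sub_eq_neg_add]
  have hGconc : ConcaveOn ℝ (Set.Ici 0) G := by
    have := hGconv.neg.add_const 1
    convert this using 1
    any_goals rfl
    funext u; simp [hG, sub_eq_neg_add]
  have hFmono : MonotoneOn F (Set.Ici 0) := fun u hu v hv huv => by
    have := hFanti hu hv huv; simp only [hF]; linarith
  have hGmono : MonotoneOn G (Set.Ici 0) := fun u hu v hv huv => by
    have := hGanti hu hv huv; simp only [hG]; linarith
  have hFle1 : ∀ u ∈ Set.Ici (0:ℝ), ∏ i, (1 - κ (u * x i)) ≤ 1 := by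
    intro u hu
    refine Finset.prod_le_one (fun i _ => sub_nonneg.2 (hκval _ (mul_nonneg hu (hx i))).2)
      (fun i _ => ?_)
    have := (hκval _ (mul_nonneg hu (hx i))).1; linarith
  have hGle1 : ∀ u ∈ Set.Ici (0:ℝ), ∏ j, (1 - κ (u * y j)) ≤ 1 := by
    intro u hu
    refine Finset.prod_le_one (fun j _ => sub_nonneg.2 (hκval _ (mul_nonneg hu (hy j))).2)
      (fun j _ => ?_)
    have := (hκval _ (mul_nonneg hu (hy j))).1; linarith
  have hF01 : ∀ u ∈ Set.Ici (0:ℝ), 0 ≤ F u := fun u hu => by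
    simp only [hF]; linarith [hFle1 u hu]
  have hG01 : ∀ u ∈ Set.Ici (0:ℝ), 0 ≤ G u := fun u hu => by
    simp only [hG]; linarith [hGle1 u hu]
  obtain ⟨a, b, ha, hb, heq, hle⟩ :=
    exists_support_ae μ hFconc hFmono (hF01 0 Set.self_mem_Ici) hW0 hWint hWs hEW
  obtain ⟨a', b', ha', hb', heq', hle'⟩ :=
    exists_support_ae μ hGconc hGmono (hG01 0 Set.self_mem_Ici) hWbar0 hWbarint hWbs hEWbar
  -- the affine majorant
  set g : Ω → ℝ := fun ω => a * a' + a * b' * Wbar ω + a' * b * W ω + b * b' * (W ω * Wbar ω)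
    with hg
  have hgint : Integrable g μ := by
    exact (((integrable_const (a * a')).add (hWbarint.const_mul (a * b'))).add
      (hWint.const_mul (a' * b))).add (hWWint.const_mul (b * b'))
  have hmain : ∫ ω, F (W ω) * G (Wbar ω) ∂μ ≤ ∫ ω, g ω ∂μ := by
    refine integral_mono_of_nonneg ?_ hgint ?_
    · exact Filter.Eventually.of_forall fun ω =>
        mul_nonneg (hF01 _ (hW0 ω)) (hG01 _ (hWbar0 ω))
    · filter_upwards [hle, hle'] with ω h1 h2
      have h3 : F (W ω) * G (Wbar ω) ≤ (a + b * W ω) * (a' + b' * Wbar ω) :=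
        mul_le_mul h1 h2 (hG01 _ (hWbar0 ω))
          (add_nonneg ha (mul_nonneg hb (hW0 ω)))
      calc F (W ω) * G (Wbar ω) ≤ (a + b * W ω) * (a' + b' * Wbar ω) := h3
        _ = g ω := by simp only [hg]; ring
  have hgval : ∫ ω, g ω ∂μ = a * a' + a * b' * ∫ ω, Wbar ω ∂μ + a' * b * ∫ ω, W ω ∂μ
      + b * b' * ∫ ω, W ω * Wbar ω ∂μ := by
    simp only [hg]
    have i1 : Integrable (fun ω => a * a' + a * b' * Wbar ω) μ :=
      (integrable_const (a * a')).add (hWbarint.const_mul (a * b'))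
    have i2 : Integrable (fun ω => a * a' + a * b' * Wbar ω + a' * b * W ω) μ :=
      i1.add (hWint.const_mul (a' * b))
    have i3 : Integrable (fun ω => b * b' * (W ω * Wbar ω)) μ := hWWint.const_mul (b * b')
    have i4 : Integrable (fun ω => a' * b * W ω) μ := hWint.const_mul (a' * b)
    have i5 : Integrable (fun ω => a * b' * Wbar ω) μ := hWbarint.const_mul (a * b')
    rw [integral_add i2 i3, integral_add i1 i4, integral_add (integrable_const (a * a')) i5,
      integral_const_mul, integral_const_mul, integral_const_mul]
    simp only [integral_const, measure_univ, probReal_univ, ENNReal.toReal_one, smul_eq_mul, one_mul]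
    congr 1
    exact integral_const_mul (b * b') fun ω => W ω * Wbar ω
  have hfin : ∫ ω, g ω ∂μ ≤ (a + b * Wstar) * (a' + b' * Wbarstar) := by
    rw [hgval]
    have h1 : a * b' * ∫ ω, Wbar ω ∂μ ≤ a * b' * Wbarstar :=
      mul_le_mul_of_nonneg_left hEWbar (by positivity)
    have h2 : a' * b * ∫ ω, W ω ∂μ ≤ a' * b * Wstar :=
      mul_le_mul_of_nonneg_left hEW (by positivity)
    have h3 : b * b' * ∫ ω, W ω * Wbar ω ∂μ ≤ b * b' * (Wstar * Wbarstar) :=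
      mul_le_mul_of_nonneg_left hEWW (by positivity)
    nlinarith [h1, h2, h3]
  have hrhs : (a + b * Wstar) * (a' + b' * Wbarstar) = F Wstar * G Wbarstar := by
    rw [heq, heq']
  calc ∫ ω, F (W ω) * G (Wbar ω) ∂μ ≤ ∫ ω, g ω ∂μ := hmain
    _ ≤ (a + b * Wstar) * (a' + b' * Wbarstar) := hfin
    _ = F Wstar * G Wbarstar := hrhs
end
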